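/- For any finite simple graph G with at least k+1 vertices, the sum index satisfies S(G) ≥ δ_k(G) + δ_{k+1}(G) − k, where δ_j(G) denotes the j-th smallest vertex degree of G. -/

import Mathlib

open SimpleGraph

/-- The sum index of a finite simple graph. -/
noncomputable def sumIndex {V : Type*} [Fintype V] (G : SimpleGraph V) : ℕ :=
  sInf {n | ∃ f : V → ℤ, Function.Injective f ∧
    {s : ℤ | ∃ u v, G.Adj u v ∧ s = f u + f v}.ncard = n}

/-- `δ_j(G)`: the `j`-th smallest vertex degree of `G` (1-indexed). -/
def nthSmallestDegree {V : Type*} [Fintype V] (G : SimpleGraph V) [DecidableRel G.Adj]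
    (j : ℕ) : ℕ :=
  ((Finset.univ.val.map fun v => G.degree v).sort (· ≤ ·)).getD (j - 1) 0

section Aux

variable {V : Type*} [Fintype V] (G : SimpleGraph V) [DecidableRel G.Adj]

/-- the finset of edge sums of a labelling -/
noncomputable def sumsFinset (f : V → ℤ) : Finset ℤ :=
  (Finset.univ.filter fun p : V × V => G.Adj p.1 p.2).image fun p => f p.1 + f p.2

lemma sums_at_subset (f : V → ℤ) (w : V) :
    ((G.neighborFinset w).image fun a => f w + f a) ⊆ sumsFinset G f := by
  intro s hs
  simp only [Finset.mem_image, SimpleGraph.mem_neighborFinset] at hs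
  obtain ⟨a, ha, rfl⟩ := hs
  simp only [sumsFinset, Finset.mem_image, Finset.mem_filter]
  exact ⟨(w, a), ⟨Finset.mem_univ _, ha⟩, rfl⟩

lemma sums_at_card (f : V → ℤ) (hf : Function.Injective f) (w : V) :
    ((G.neighborFinset w).image fun a => f w + f a).card = G.degree w := by
  rw [Finset.card_image_of_injective _ (fun a b h => hf (by linarith))]
  exact G.card_neighborFinset_eq_degree w

lemma degree_le_sums (f : V → ℤ) (hf : Function.Injective f) (w : V) :
    G.degree w ≤ (sumsFinset G f).card := by
  rw [← sums_at_card G f hf w]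
  exact Finset.card_le_card (sums_at_subset G f w)

lemma two_vertex_bound (f : V → ℤ) (hf : Function.Injective f) (u v : V) :
    (G.degree u : ℤ) + G.degree v
      - (Finset.univ.filter fun w => f u < f w).card
      - (Finset.univ.filter fun w => f w < f v).card - 1
    ≤ (sumsFinset G f).card := by
  classical
  set Su := (G.neighborFinset u).image fun a => f u + f a with hSu
  set Sv := (G.neighborFinset v).image fun a => f v + f a with hSv
  set T1 := Finset.univ.filter fun w => f u < f w with hT1
  set T2 := Finset.univ.filter fun w => f w < f v with hT2
  have hsub : Su ∪ Sv ⊆ sumsFinset G f :=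
    Finset.union_subset (sums_at_subset G f u) (sums_at_subset G f v)
  have hinter : Su ∩ Sv ⊆
      (T1.image fun w => f v + f w) ∪ (T2.image fun w => f u + f w) ∪ {f u + f v} := by
    intro s hs
    rw [Finset.mem_inter] at hs
    obtain ⟨hsu, hsv⟩ := hs
    simp only [hSu, hSv, Finset.mem_image, SimpleGraph.mem_neighborFinset] at hsu hsv
    obtain ⟨a, ha, hsa⟩ := hsu
    obtain ⟨b, hb, hsb⟩ := hsv
    rcases lt_trichotomy (f a) (f v) with h | h | h
    · refine Finset.mem_union_left _ (Finset.mem_union_right _ ?_)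
      exact Finset.mem_image.2 ⟨a, by simp [hT2, h], hsa⟩
    · refine Finset.mem_union_right _ ?_
      simp [← hsa, h]
    · refine Finset.mem_union_left _ (Finset.mem_union_left _ ?_)
      have hbgt : f u < f b := by omega
      exact Finset.mem_image.2 ⟨b, by simp [hT1, hbgt], hsb⟩
  have hintercard : (Su ∩ Sv).card ≤ T1.card + T2.card + 1 := by
    refine (Finset.card_le_card hinter).trans ?_
    refine (Finset.card_union_le _ _).trans ?_
    have h1 : ((T1.image fun w => f v + f w) ∪ (T2.image fun w => f u + f w)).card
        ≤ T1.card + T2.card :=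
      (Finset.card_union_le _ _).trans
        (Nat.add_le_add (Finset.card_image_le) (Finset.card_image_le))
    simpa using Nat.add_le_add h1 (le_refl ({f u + f v} : Finset ℤ).card)
  have hcards : (Su ∪ Sv).card + (Su ∩ Sv).card = Su.card + Sv.card :=
    Finset.card_union_add_card_inter _ _
  have hSucard : Su.card = G.degree u := sums_at_card G f hf u
  have hSvcard : Sv.card = G.degree v := sums_at_card G f hf v
  have hle : (Su ∪ Sv).card ≤ (sumsFinset G f).card := Finset.card_le_card hsub
  omega

variable [DecidableEq V]

lemma subset_bound (f : V → ℤ) (hf : Function.Injective f) (C : Finset V) (d : ℕ)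
    (hC : 2 ≤ C.card) (hdeg : ∀ w ∈ C, d ≤ G.degree w) :
    (d : ℤ) + d - (Finset.univ.filter fun w => w ∉ C).card - 1
    ≤ (sumsFinset G f).card := by
  have hne : C.Nonempty := Finset.card_pos.1 (by omega)
  obtain ⟨u, hu, hmax⟩ := Finset.exists_max_image C f hne
  obtain ⟨v, hv, hmin⟩ := Finset.exists_min_image C f hne
  have huv : f v < f u := by
    rcases lt_or_ge (f v) (f u) with h | h
    · exact h
    · exfalso
      have hall : ∀ w ∈ C, w = u := fun w hw =>
        hf (le_antisymm (hmax w hw) (le_trans h (hmin w hw)))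
      have : C.card ≤ 1 := Finset.card_le_one.2 fun a ha b hb => (hall a ha).trans (hall b hb).symm
      omega
  have hT1 : (Finset.univ.filter fun w => f u < f w) ⊆ Finset.univ.filter fun w => w ∉ C := by
    intro w hw
    simp only [Finset.mem_filter, Finset.mem_univ, true_and] at *
    intro hwC
    exact absurd (hmax w hwC) (not_le.2 hw)
  have hT2 : (Finset.univ.filter fun w => f w < f v) ⊆ Finset.univ.filter fun w => w ∉ C := by
    intro w hw
    simp only [Finset.mem_filter, Finset.mem_univ, true_and] at *
    intro hwC
    exact absurd (hmin w hwC) (not_le.2 hw)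
  have hdisj : Disjoint (Finset.univ.filter fun w => f u < f w)
      (Finset.univ.filter fun w => f w < f v) := by
    rw [Finset.disjoint_left]
    intro w hw1 hw2
    simp only [Finset.mem_filter, Finset.mem_univ, true_and] at hw1 hw2
    omega
  have hcard : (Finset.univ.filter fun w => f u < f w).card
      + (Finset.univ.filter fun w => f w < f v).card
      ≤ (Finset.univ.filter fun w => w ∉ C).card := by
    rw [← Finset.card_union_of_disjoint hdisj]
    exact Finset.card_le_card (Finset.union_subset hT1 hT2)
  have hmain := two_vertex_bound G f hf u v
  have hdu := hdeg u hu
  have hdv := hdeg v hv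
  omega

lemma degList_length :
    ((Finset.univ.val.map fun v => G.degree v).sort (· ≤ ·)).length = Fintype.card V := by
  rw [Multiset.length_sort, Multiset.card_map]
  exact Finset.card_univ

lemma nthSmallestDegree_exists (j : ℕ) (hj : j - 1 < Fintype.card V) :
    ∃ v : V, G.degree v = nthSmallestDegree G j := by
  set L := ((Finset.univ.val.map fun v => G.degree v).sort (· ≤ ·)) with hL
  have hlen : L.length = Fintype.card V := degList_length G
  have hjl : j - 1 < L.length := by omega
  have h1 : nthSmallestDegree G j = L[j-1] := List.getD_eq_getElem L 0 hjl
  have h2 : L[j-1] ∈ L := List.getElem_mem hjl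
  have h3 : L[j-1] ∈ (Finset.univ.val.map fun v => G.degree v) := by
    rw [← Multiset.mem_sort (· ≤ ·)]
    exact h2
  obtain ⟨v, _, hv⟩ := Multiset.mem_map.1 h3
  exact ⟨v, by rw [hv, h1]⟩

lemma nthSmallestDegree_mono (k : ℕ) (hk : 1 ≤ k) (hkc : k + 1 ≤ Fintype.card V) :
    nthSmallestDegree G k ≤ nthSmallestDegree G (k+1) := by
  set L := ((Finset.univ.val.map fun v => G.degree v).sort (· ≤ ·)) with hL
  have hlen : L.length = Fintype.card V := degList_length G
  have hsorted : L.Pairwise (· ≤ ·) := Multiset.pairwise_sort _ _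
  have h1 : k - 1 < L.length := by omega
  have h2 : k + 1 - 1 < L.length := by omega
  have e1 : nthSmallestDegree G k = L[k-1] := List.getD_eq_getElem L 0 h1
  have e2 : nthSmallestDegree G (k+1) = L[k+1-1] := List.getD_eq_getElem L 0 h2
  rw [e1, e2]
  exact List.pairwise_iff_getElem.1 hsorted (k-1) (k+1-1) h1 h2 (by omega)

lemma count_lt_nthSmallestDegree (j : ℕ) (hj : j - 1 < Fintype.card V) :
    (Finset.univ.filter fun v => G.degree v < nthSmallestDegree G j).card ≤ j - 1 := by
  set L := ((Finset.univ.val.map fun v => G.degree v).sort (· ≤ ·)) with hL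
  have hlen : L.length = Fintype.card V := degList_length G
  have hjl : j - 1 < L.length := by omega
  set δ := nthSmallestDegree G j with hδ
  have h1 : δ = L[j-1] := List.getD_eq_getElem L 0 hjl
  have hsorted : L.Pairwise (· ≤ ·) := Multiset.pairwise_sort _ _
  have s1 : (Finset.univ.filter fun v => G.degree v < δ).card
      = Multiset.countP (fun d => d < δ) (Finset.univ.val.map fun v => G.degree v) := by
    rw [Finset.card_def, Finset.filter_val, ← Multiset.countP_eq_card_filter,
      Multiset.countP_map]
    rw [← Multiset.countP_eq_card_filter]
  have s2 : Multiset.countP (fun d => d < δ) (Finset.univ.val.map fun v => G.degree v)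
      = L.countP (fun d => decide (d < δ)) := by
    conv_lhs => rw [← Multiset.sort_eq (Finset.univ.val.map fun v => G.degree v) (· ≤ ·)]
    rw [Multiset.coe_countP]
  have s3 : L.countP (fun d => decide (d < δ)) ≤ j - 1 := by
    have hsplit : L = L.take (j-1) ++ L.drop (j-1) := (List.take_append_drop _ _).symm
    have hdropzero : (L.drop (j-1)).countP (fun d => decide (d < δ)) = 0 := by
      rw [List.countP_eq_zero]
      intro a ha
      have hdrop : L.drop (j-1) = L[j-1] :: L.drop (j-1+1) := List.drop_eq_getElem_cons hjl
      have hsorted' : (L.drop (j-1)).Pairwise (· ≤ ·) := hsorted.drop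
      have hge : δ ≤ a := by
        rw [hdrop] at ha hsorted'
        rcases List.mem_cons.1 ha with h | h
        · rw [h, h1]
        · rw [h1]; exact List.rel_of_pairwise_cons hsorted' h
      simp [hge, not_lt]
    calc L.countP (fun d => decide (d < δ))
        = (L.take (j-1)).countP _ + (L.drop (j-1)).countP _ := by
          conv_lhs => rw [hsplit]
          exact List.countP_append
      _ ≤ (L.take (j-1)).length := by rw [hdropzero, Nat.add_zero]; exact List.countP_le_length
      _ ≤ j - 1 := List.length_take_le _ _
  omega

lemma main_bound (k : ℕ) (hk : 1 ≤ k) (hcard : k + 1 ≤ Fintype.card V)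
    (f : V → ℤ) (hf : Function.Injective f) :
    (nthSmallestDegree G k : ℤ) + nthSmallestDegree G (k + 1) - k
      ≤ (sumsFinset G f).card := by
  set n := Fintype.card V with hn
  set d1 := nthSmallestDegree G k with hd1
  set d2 := nthSmallestDegree G (k+1) with hd2
  have hmono : d1 ≤ d2 := nthSmallestDegree_mono G k hk hcard
  have hc1 : (Finset.univ.filter fun v => G.degree v < d1).card ≤ k - 1 :=
    count_lt_nthSmallestDegree G k (by omega)
  have hc2 : (Finset.univ.filter fun v => G.degree v < d2).card ≤ k :=
    le_trans (count_lt_nthSmallestDegree G (k+1) (by omega)) (by omega)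
  rcases eq_or_lt_of_le hmono with heq | hlt
  · -- δ_k = δ_{k+1}
    set A := Finset.univ.filter fun v => d1 ≤ G.degree v with hA
    have hAc : (Finset.univ.filter fun w => w ∉ A).card ≤ k - 1 := by
      have he : (Finset.univ.filter fun w => w ∉ A)
          = Finset.univ.filter fun v => G.degree v < d1 :=
        Finset.filter_congr (fun x _ => by simp [hA, not_le])
      rw [he]; exact hc1
    have hsum : A.card + (Finset.univ.filter fun w => w ∉ A).card = n := by
      have he : (Finset.univ.filter fun w => w ∉ A)
          = Finset.univ.filter fun v => ¬ d1 ≤ G.degree v :=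
        Finset.filter_congr (fun x _ => by simp [hA])
      rw [he, hA, Finset.card_filter_add_card_filter_not]
      exact Finset.card_univ
    have hA2 : 2 ≤ A.card := by omega
    have hM := subset_bound G f hf A d1 hA2 (fun w hw => (Finset.mem_filter.1 hw).2)
    omega
  · -- δ_k < δ_{k+1}
    set B := Finset.univ.filter fun v => d2 ≤ G.degree v with hB
    have hBc : (Finset.univ.filter fun w => w ∉ B).card ≤ k := by
      have he : (Finset.univ.filter fun w => w ∉ B)
          = Finset.univ.filter fun v => G.degree v < d2 :=
        Finset.filter_congr (fun x _ => by simp [hB, not_le])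
      rw [he]; exact hc2
    have hsum : B.card + (Finset.univ.filter fun w => w ∉ B).card = n := by
      have he : (Finset.univ.filter fun w => w ∉ B)
          = Finset.univ.filter fun v => ¬ d2 ≤ G.degree v :=
        Finset.filter_congr (fun x _ => by simp [hB])
      rw [he, hB, Finset.card_filter_add_card_filter_not]
      exact Finset.card_univ
    by_cases hB2 : 2 ≤ B.card
    · have hM := subset_bound G f hf B d2 hB2 (fun w hw => (Finset.mem_filter.1 hw).2)
      omega
    · -- then n = k+1
      have hnk : n ≤ k + 1 := by omega
      obtain ⟨w, hw⟩ := nthSmallestDegree_exists G (k+1) (by omega)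
      have h1 : d2 ≤ (sumsFinset G f).card := by
        rw [hd2, ← hw]; exact degree_le_sums G f hf w
      obtain ⟨v0, hv0⟩ := nthSmallestDegree_exists G k (by omega)
      have h2 : d1 < n := by
        rw [hd1, hn, ← hv0]; exact G.degree_lt_card_verts v0
      omega

end Aux

/-- For any graph `G` with at least `k+1` vertices,
`S(G) ≥ δ_k(G) + δ_{k+1}(G) - k`. -/
theorem stmt6 {V : Type*} [Fintype V] (G : SimpleGraph V) [DecidableRel G.Adj]
    (k : ℕ) (hk : 1 ≤ k) (hcard : k + 1 ≤ Fintype.card V) :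
    (nthSmallestDegree G k : ℤ) + nthSmallestDegree G (k + 1) - k ≤ (sumIndex G : ℤ) := by
  classical
  set S := {n | ∃ f : V → ℤ, Function.Injective f ∧
    {s : ℤ | ∃ u v, G.Adj u v ∧ s = f u + f v}.ncard = n} with hS
  have hne : S.Nonempty := by
    refine ⟨_, fun v => ((Fintype.equivFin V v : ℕ) : ℤ), ?_, rfl⟩
    intro a b h
    have h' : ((Fintype.equivFin V a : ℕ) : ℤ) = ((Fintype.equivFin V b : ℕ) : ℤ) := h
    exact (Fintype.equivFin V).injective (Fin.val_injective (by exact_mod_cast h'))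
  have hmem : sumIndex G ∈ S := Nat.sInf_mem hne
  obtain ⟨f, hf, hval⟩ := hmem
  have hset : {s : ℤ | ∃ u v, G.Adj u v ∧ s = f u + f v} = ↑(sumsFinset G f) := by
    ext s
    simp only [Set.mem_setOf_eq, sumsFinset, Finset.coe_image, Set.mem_image,
      Finset.mem_coe, Finset.mem_filter, Finset.mem_univ, true_and, Prod.exists]
    constructor <;> rintro ⟨u, v, h1, h2⟩ <;> exact ⟨u, v, h1, h2.symm⟩
  rw [hset, Set.ncard_coe_finset] at hval
  rw [← hval]
  exact main_bound G k hk hcard f hf
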